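/- Fix n ∈ ℕ, a positive definite quadratic form g on ℝ^d with |j|_g² := g(j,j), and r ∈ ℕ. Let μ be the product over j ∈ ℤ^d of the uniform probability measures on [−1/2, 1/2], a probability measure on A := [−1/2,1/2]^{ℤ^d}, and for a ∈ A define ω_j(a) := |j|_g² + a_j (1+|j|)^{−n}. Then there exist τ > 0 and a set 𝒱^{res} ⊂ A with μ(𝒱^{res}) = 0 such that for every a ∈ A ∖ 𝒱^{res} there exists γ > 0 with the following property: for every N ≥ 1 and every k : ℤ^d_N → ℤ with 0 < Σ_{j∈ℤ^d_N} |k_j| ≤ r, one has |Σ_{j∈ℤ^d_N} k_j ω_j(a)| ≥ γ / N^{τ}, where ℤ^d_N := {j ∈ ℤ^d : |j| ≤ N}. -/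

import Mathlib

open scoped BigOperators
open MeasureTheory
open scoped ENNReal

namespace AG

abbrev Zd (d : ℕ) := Fin d → ℤ

noncomputable def enorm {d : ℕ} (j : Zd d) : ℝ := Real.sqrt (∑ i, ((j i : ℝ))^2)

/-- `|j|_g² = g(j,j)` for a quadratic form with coefficients `g`. -/
noncomputable def qform (d : ℕ) (g : Fin d → Fin d → ℝ) (j : Zd d) : ℝ :=
  ∑ i, ∑ k, g i k * (j i : ℝ) * (j k : ℝ)

/-- `μ` is the product over `j ∈ ℤ^d` of the uniform probability measures on
`[−1/2,1/2]`: on every finite cylinder it is given by the product of the uniform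
measures of the factors. -/
def IsCylinderUniform (d : ℕ) (μ : Measure (Zd d → ℝ)) : Prop :=
  ∀ (S : Finset (Zd d)) (t : Zd d → Set ℝ), (∀ j, MeasurableSet (t j)) →
    μ {a | ∀ j ∈ S, a j ∈ t j} =
      ∏ j ∈ S, volume (t j ∩ Set.Icc (-(1 : ℝ) / 2) (1 / 2))

/-- The NLS frequencies `ω_j(a) = |j|_g² + a_j (1+|j|)^{−n}`. -/
noncomputable def nlsFreq (d n : ℕ) (g : Fin d → Fin d → ℝ) (a : Zd d → ℝ)
    (j : Zd d) : ℝ :=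
  qform d g j + a j * (1 + enorm j) ^ (-(n : ℝ))

/-! ### auxiliary -/

lemma enorm_nonneg {d : ℕ} (j : Zd d) : 0 ≤ enorm j := Real.sqrt_nonneg _

lemma abs_coord_le_enorm {d : ℕ} (j : Zd d) (i : Fin d) : |(j i : ℝ)| ≤ enorm j := by
  rw [enorm, ← Real.sqrt_sq_eq_abs]
  exact Real.sqrt_le_sqrt (Finset.single_le_sum (fun i _ => sq_nonneg ((j i : ℝ))) (Finset.mem_univ i))

noncomputable def wt (d n : ℕ) (j : Zd d) : ℝ := ((1 + enorm j) ^ n)⁻¹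

lemma wt_pos {d n : ℕ} (j : Zd d) : 0 < wt d n j := by
  have := enorm_nonneg j
  unfold wt; positivity

lemma wt_le_one {d n : ℕ} (j : Zd d) : wt d n j ≤ 1 := by
  have := enorm_nonneg j
  rw [wt, inv_le_one_iff₀]
  right
  exact one_le_pow₀ (by linarith)

lemma nlsFreq_eq {d n : ℕ} (g : Fin d → Fin d → ℝ) (a : Zd d → ℝ) (j : Zd d) :
    nlsFreq d n g a j = qform d g j + a j * wt d n j := by
  have h0 : (0:ℝ) ≤ 1 + enorm j := by have := enorm_nonneg j; linarith
  rw [nlsFreq, wt, ← Real.rpow_natCast (1 + enorm j) n, ← Real.rpow_neg h0]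

def eOf {d : ℕ} (o : Option (Zd d × Bool)) (j : Zd d) : ℤ :=
  o.elim 0 fun p => if j = p.1 then (if p.2 then 1 else -1) else 0

def kOf {d r : ℕ} (t : Fin r → Option (Zd d × Bool)) (j : Zd d) : ℤ :=
  ∑ i, eOf (t i) j

lemma eOf_eq_zero {d : ℕ} {o : Option (Zd d × Bool)} {j : Zd d}
    (h : ∀ p, o = some p → p.1 ≠ j) : eOf o j = 0 := by
  match o with
  | none => rfl
  | some p =>
    have := h p rfl
    simp only [eOf, Option.elim]
    rw [if_neg (fun hj => this hj.symm)]

lemma kOf_support {d r : ℕ} (t : Fin r → Option (Zd d × Bool)) (j : Zd d)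
    (h : kOf t j ≠ 0) : ∃ i p, t i = some p ∧ p.1 = j := by
  by_contra hc
  push_neg at hc
  apply h
  rw [kOf]
  refine Finset.sum_eq_zero fun i _ => eOf_eq_zero (fun p hp => hc i p hp)

lemma kOf_abs_sum_le {d r : ℕ} (t : Fin r → Option (Zd d × Bool)) (S : Finset (Zd d)) :
    ∑ j ∈ S, |kOf t j| ≤ (r : ℤ) := by
  calc ∑ j ∈ S, |kOf t j| ≤ ∑ j ∈ S, ∑ i, |eOf (t i) j| := by
        refine Finset.sum_le_sum fun j _ => Finset.abs_sum_le_sum_abs _ _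
    _ = ∑ i, ∑ j ∈ S, |eOf (t i) j| := Finset.sum_comm
    _ ≤ ∑ _i : Fin r, 1 := by
        refine Finset.sum_le_sum fun i _ => ?_
        match hti : t i with
        | none => simp [eOf]
        | some p =>
          have : ∀ j, |eOf (some p) j| = if j = p.1 then 1 else 0 := by
            intro j
            simp only [eOf, Option.elim]
            split_ifs <;> simp
          simp only [this]
          rw [Finset.sum_ite_eq' S p.1 (fun _ => (1:ℤ))]
          split_ifs <;> simp
    _ = (r : ℤ) := by simp

/-- encoding of an integer vector with ℓ¹ norm ≤ r as at most r signed unit vectors -/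
lemma encode {d : ℕ} : ∀ (r : ℕ) (k : Zd d → ℤ) (S : Finset (Zd d)),
    (∀ j, k j ≠ 0 → j ∈ S) → (∑ j ∈ S, (k j).natAbs ≤ r) →
    ∃ t : Fin r → Option (Zd d × Bool),
      (∀ i p, t i = some p → k p.1 ≠ 0) ∧ ∀ j, kOf t j = k j := by
  intro r
  induction r with
  | zero =>
    intro k S hS hsum
    refine ⟨fun i => i.elim0, fun i => i.elim0, fun j => ?_⟩
    have h0 : ∀ j ∈ S, (k j).natAbs = 0 :=
      Finset.sum_eq_zero_iff.mp (Nat.le_zero.mp hsum)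
    have hk : ∀ j, k j = 0 := by
      intro j
      by_contra hj
      have := h0 j (hS j hj)
      omega
    simp [kOf, hk]
  | succ r ih =>
    intro k S hS hsum
    by_cases hk : ∀ j, k j = 0
    · refine ⟨fun _ => none, by simp, fun j => by simp [kOf, eOf, hk]⟩
    · push_neg at hk
      obtain ⟨j0, hj0⟩ := hk
      set k' : Zd d → ℤ := Function.update k j0 (k j0 - if 0 < k j0 then 1 else -1) with hk'
      have hk'j0 : k' j0 = k j0 - (if 0 < k j0 then 1 else -1) := by
        simp [hk']
      have hk'ne : ∀ j, j ≠ j0 → k' j = k j := by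
        intro j hj; simp [hk', Function.update_of_ne hj]
      have habs : (k' j0).natAbs + 1 = (k j0).natAbs := by
        rw [hk'j0]
        split_ifs with h <;> omega
      have hS' : ∀ j, k' j ≠ 0 → j ∈ S := by
        intro j hj
        by_cases hjj : j = j0
        · exact hjj ▸ hS j0 hj0
        · exact hS j (by rwa [hk'ne j hjj] at hj)
      have hsum' : ∑ j ∈ S, (k' j).natAbs ≤ r := by
        have hmem : j0 ∈ S := hS j0 hj0
        have e1 : ∑ j ∈ S, (k' j).natAbs = (k' j0).natAbs + ∑ j ∈ S.erase j0, (k' j).natAbs :=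
          (Finset.add_sum_erase S _ hmem).symm
        have e2 : ∑ j ∈ S, (k j).natAbs = (k j0).natAbs + ∑ j ∈ S.erase j0, (k j).natAbs :=
          (Finset.add_sum_erase S _ hmem).symm
        have e3 : ∑ j ∈ S.erase j0, (k' j).natAbs = ∑ j ∈ S.erase j0, (k j).natAbs := by
          refine Finset.sum_congr rfl fun j hj => ?_
          rw [hk'ne j (Finset.ne_of_mem_erase hj)]
        omega
      obtain ⟨t', ht'1, ht'2⟩ := ih k' S hS' hsum'
      set tt : Fin (r+1) → Option (Zd d × Bool) :=
        Fin.cons (some (j0, decide (0 < k j0))) t' with htt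
      have htt0 : tt 0 = some (j0, decide (0 < k j0)) := rfl
      have htts : ∀ i : Fin r, tt i.succ = t' i := fun i => rfl
      refine ⟨tt, ?_, ?_⟩
      · intro i
        refine Fin.cases ?_ ?_ i
        · intro p hp
          rw [htt0] at hp
          cases hp
          exact hj0
        · intro i' p hp
          rw [htts] at hp
          have hne := ht'1 i' p hp
          by_cases hpj : p.1 = j0
          · exact hpj ▸ hj0
          · rw [← hk'ne p.1 hpj]; exact hne
      · intro j
        rw [kOf, Fin.sum_univ_succ]
        simp only [htt0, htts]
        rw [show ∑ i : Fin r, eOf (t' i) j = kOf t' j from rfl, ht'2 j]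
        by_cases hjj : j = j0
        · subst hjj
          rw [hk'j0]
          simp only [eOf, Option.elim, if_pos rfl]
          by_cases h : 0 < k j <;> simp [h]
        · rw [hk'ne j hjj]
          have : eOf (some (j0, decide (0 < k j0))) j = 0 := by
            simp only [eOf, Option.elim]
            rw [if_neg hjj]
          rw [this, zero_add]
  
/-! ### interval helpers -/

noncomputable def Jset (e δ bb : ℝ) : Set ℝ :=
  Set.Icc (min ((-e - δ) / bb) ((-e + δ) / bb)) (max ((-e - δ) / bb) ((-e + δ) / bb))

lemma mem_Jset {bb x e δ : ℝ} (hb : bb ≠ 0) (h : |bb * x + e| ≤ δ) : x ∈ Jset e δ bb := by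
  rw [abs_le] at h
  obtain ⟨h1, h2⟩ := h
  rcases hb.lt_or_gt with hneg | hpos
  · constructor
    · refine le_trans (min_le_right _ _) ?_
      rw [div_le_iff_of_neg hneg]
      nlinarith
    · refine le_trans ?_ (le_max_left _ _)
      rw [le_div_iff_of_neg hneg]
      nlinarith
  · constructor
    · refine le_trans (min_le_left _ _) ?_
      rw [div_le_iff₀ hpos]
      nlinarith
    · refine le_trans ?_ (le_max_right _ _)
      rw [le_div_iff₀ hpos]
      nlinarith

lemma vol_Jset {bb m : ℝ} (e δ : ℝ) (hm : 0 < m) (hmb : m ≤ |bb|) (hδ : 0 ≤ δ) :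
    volume (Jset e δ bb) ≤ ENNReal.ofReal (2 * δ / m) := by
  have habsb : 0 < |bb| := lt_of_lt_of_le hm hmb
  rw [Jset, Real.volume_Icc, max_sub_min_eq_abs]
  refine ENNReal.ofReal_le_ofReal ?_
  have hbb : bb ≠ 0 := by
    intro h; rw [h, abs_zero] at habsb; exact lt_irrefl _ habsb
  have hdiff : (-e + δ)/bb - (-e - δ)/bb = (2*δ)/bb := by
    field_simp
    ring
  rw [hdiff, abs_div, abs_of_nonneg (by positivity : (0:ℝ) ≤ 2 * δ)]
  rw [div_le_div_iff₀ habsb hm]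
  nlinarith

/-- cell of a uniform partition of `[-1/2, 1/2]` into `M` pieces -/
noncomputable def cellSet (M v : ℕ) : Set ℝ :=
  Set.Icc (-(1:ℝ)/2 + v / M) (-(1:ℝ)/2 + v / M + 1 / M)

lemma cell_exists {M : ℕ} (hM : 1 ≤ M) {x : ℝ} (hx : x ∈ Set.Icc (-(1:ℝ)/2) (1/2)) :
    ∃ v : Fin M, x ∈ cellSet M v := by
  have hM0 : (0:ℝ) < M := by exact_mod_cast hM
  set y := x + 1/2 with hy
  have hy0 : 0 ≤ y := by have := hx.1; rw [hy]; linarith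
  have hy1 : y ≤ 1 := by have := hx.2; rw [hy]; linarith
  set v := min (M - 1) ⌊y * M⌋₊ with hv
  have hvM : v < M := Nat.lt_of_le_of_lt (min_le_left _ _) (by omega)
  have hvy : (v : ℝ) ≤ y * M := by
    calc (v:ℝ) ≤ (⌊y * M⌋₊ : ℝ) := by exact_mod_cast min_le_right _ _
      _ ≤ y * M := Nat.floor_le (by positivity)
  have hyv : y * M ≤ v + 1 := by
    rcases le_or_gt (M - 1) ⌊y * M⌋₊ with h1 | h1
    · have hveq : v = M - 1 := min_eq_left h1
      have hcast : (v : ℝ) + 1 = M := by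
        rw [hveq]
        have : ((M - 1 : ℕ) : ℝ) = (M : ℝ) - 1 := by
          have : (1:ℕ) ≤ M := hM
          push_cast [Nat.cast_sub this]
          ring
        rw [this]; ring
      rw [hcast]
      nlinarith
    · have hveq : v = ⌊y * M⌋₊ := min_eq_right h1.le
      rw [hveq]
      exact (Nat.lt_floor_add_one (y * M)).le
  have hdl : (v:ℝ)/M ≤ y := by
    rw [div_le_iff₀ hM0]; exact hvy
  have hdr : y ≤ ((v:ℝ) + 1)/M := by
    rw [le_div_iff₀ hM0]; exact hyv
  refine ⟨⟨v, hvM⟩, ?_, ?_⟩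
  · show -(1:ℝ)/2 + (v:ℝ)/M ≤ x
    have hx' : x = y - 1/2 := by rw [hy]; ring
    rw [hx']; linarith
  · show x ≤ -(1:ℝ)/2 + (v:ℝ)/M + 1/M
    have hx' : x = y - 1/2 := by rw [hy]; ring
    have : ((v:ℝ) + 1)/M = (v:ℝ)/M + 1/M := by ring
    rw [hx']; linarith [hdr, this]

lemma cell_subset {M v : ℕ} (hvM : v < M) : cellSet M v ⊆ Set.Icc (-(1:ℝ)/2) (1/2) := by
  have hM0 : (0:ℝ) < M := by exact_mod_cast Nat.zero_lt_of_lt hvM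
  refine Set.Icc_subset_Icc ?_ ?_
  · have : (0:ℝ) ≤ (v:ℝ)/M := by positivity
    linarith
  · have hlt : (v : ℝ) + 1 ≤ M := by exact_mod_cast Nat.succ_le_of_lt hvM
    have h1 : (v:ℝ)/M + 1/M ≤ 1 := by
      rw [← add_div, div_le_one hM0]
      linarith
    linarith

lemma cell_vol {M v : ℕ} (hM : 1 ≤ M) (hvM : v < M) :
    volume (cellSet M v ∩ Set.Icc (-(1:ℝ)/2) (1/2)) = ENNReal.ofReal (1/M) := by
  rw [Set.inter_eq_self_of_subset_left (cell_subset hvM), cellSet, Real.volume_Icc]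
  congr 1
  ring

lemma cell_lo_le {M v : ℕ} {x : ℝ} (h : x ∈ cellSet M v) :
    |x - (-(1:ℝ)/2 + v / M)| ≤ 1 / M := by
  obtain ⟨h1, h2⟩ := h
  rw [abs_le]
  constructor <;> [linarith; linarith]

lemma slab {d : ℕ} (μ : Measure (Zd d → ℝ)) (hμ : IsCylinderUniform d μ)
    (S : Finset (Zd d)) (j0 : Zd d) (hj0 : j0 ∈ S)
    (b : Zd d → ℝ) (c m R ε : ℝ) (hm : 0 < m) (hmb : m ≤ |b j0|)
    (hR : ∑ j ∈ S.erase j0, |b j| ≤ R) (hε : 0 ≤ ε) :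
    μ {a | (∀ j, a j ∈ Set.Icc (-(1:ℝ)/2) (1/2)) ∧ |c + ∑ j ∈ S, b j * a j| < ε}
      ≤ ENNReal.ofReal (2 * ε / m) := by
  classical
  have hb0 : b j0 ≠ 0 := by
    intro h; rw [h, abs_zero] at hmb; linarith
  have hR0 : 0 ≤ R := le_trans (Finset.sum_nonneg fun j _ => abs_nonneg _) hR
  set S' := S.erase j0 with hS'
  set Bad := {a : Zd d → ℝ | (∀ j, a j ∈ Set.Icc (-(1:ℝ)/2) (1/2)) ∧
    |c + ∑ j ∈ S, b j * a j| < ε} with hBadDef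
  have key : ∀ M : ℕ, 1 ≤ M → μ Bad ≤ ENNReal.ofReal (2 * (ε + R / M) / m) := by
    intro M hM
    have hM0 : (0:ℝ) < M := by exact_mod_cast hM
    set δ := ε + R / (M:ℝ) with hδ
    have hδ0 : 0 ≤ δ := by positivity
    -- the cylinder family
    set xv : ({j // j ∈ S'} → Fin M) → ℝ :=
      fun u => ∑ j ∈ S'.attach, b j * (-(1:ℝ)/2 + (u j : ℕ) / M) with hxv
    set tv : ({j // j ∈ S'} → Fin M) → Zd d → Set ℝ := fun u j =>
      if j = j0 then Jset (c + xv u) δ (b j0)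
      else if h : j ∈ S' then cellSet M (u ⟨j, h⟩) else Set.univ with htv
    have cover : Bad ⊆ ⋃ u : {j // j ∈ S'} → Fin M, {a | ∀ j ∈ S, a j ∈ tv u j} := by
      rintro a ⟨hcube, hlin⟩
      have hch : ∀ j : {j // j ∈ S'}, ∃ v : Fin M, a j ∈ cellSet M v :=
        fun j => cell_exists hM (hcube j)
      choose u hu using hch
      have hcell : ∀ j (h : j ∈ S'), a j ∈ cellSet M (u ⟨j, h⟩) := fun j h => hu ⟨j, h⟩
      refine Set.mem_iUnion.mpr ⟨u, fun j hjS => ?_⟩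
      by_cases hjj : j = j0
      · subst hjj
        have htvj : tv u j = Jset (c + xv u) δ (b j) := by simp only [htv, if_pos]
        rw [htvj]
        have herr : |∑ j' ∈ S', b j' * a j' - xv u| ≤ R / M := by
          rw [hxv, ← Finset.sum_attach S' (fun j' => b j' * a j'), ← Finset.sum_sub_distrib]
          calc |∑ j' ∈ S'.attach, (b j' * a j' - b j' * (-(1:ℝ)/2 + (u j' : ℕ) / M))|
              ≤ ∑ j' ∈ S'.attach, |b j' * a j' - b j' * (-(1:ℝ)/2 + (u j' : ℕ) / M)| :=
                Finset.abs_sum_le_sum_abs _ _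
            _ ≤ ∑ j' ∈ S'.attach, |b (j' : Zd d)| * (1/M) := by
                refine Finset.sum_le_sum fun j' _ => ?_
                rw [← mul_sub, abs_mul]
                refine mul_le_mul_of_nonneg_left ?_ (abs_nonneg _)
                have := cell_lo_le (M := M) (v := (u j' : ℕ)) (hu j')
                exact this
            _ = (∑ j' ∈ S', |b j'|) * (1/M) := by
                rw [← Finset.sum_mul, Finset.sum_attach S' (fun j' => |b j'|)]
            _ ≤ R * (1/M) := mul_le_mul_of_nonneg_right hR (by positivity)
            _ = R / M := by ring
        have hsplit : b j * a j + (c + xv u) =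
            (c + ∑ j' ∈ S, b j' * a j') - (∑ j' ∈ S', b j' * a j' - xv u) := by
          rw [hS', ← Finset.add_sum_erase S (fun j' => b j' * a j') hjS]
          ring
        have hkey : |b j * a j + (c + xv u)| ≤ δ := by
          rw [hsplit, hδ]
          calc |(c + ∑ j' ∈ S, b j' * a j') - (∑ j' ∈ S', b j' * a j' - xv u)|
              ≤ |c + ∑ j' ∈ S, b j' * a j'| + |∑ j' ∈ S', b j' * a j' - xv u| := abs_sub _ _
            _ ≤ ε + R / M := add_le_add hlin.le herr
        exact mem_Jset hb0 hkey
      · have hjS' : j ∈ S' := Finset.mem_erase.mpr ⟨hjj, hjS⟩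
        have htvj : tv u j = cellSet M (u ⟨j, hjS'⟩) := by
          simp only [htv]; rw [if_neg hjj, dif_pos hjS']
        rw [htvj]
        exact hcell j hjS'
    have hmeas : ∀ u : {j // j ∈ S'} → Fin M, ∀ j, MeasurableSet (tv u j) := by
      intro u j
      simp only [htv]
      split
      · exact measurableSet_Icc
      · split
        · exact measurableSet_Icc
        · exact MeasurableSet.univ
    have hbound : ∀ u : {j // j ∈ S'} → Fin M,
        μ {a | ∀ j ∈ S, a j ∈ tv u j} ≤
          ENNReal.ofReal (2 * δ / m) * ENNReal.ofReal (1/M) ^ S'.card := by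
      intro u
      rw [hμ S (tv u) (hmeas u)]
      rw [← Finset.mul_prod_erase S _ hj0, ← hS']
      have h1 : volume (tv u j0 ∩ Set.Icc (-(1:ℝ)/2) (1/2)) ≤ ENNReal.ofReal (2 * δ / m) := by
        refine le_trans (measure_mono Set.inter_subset_left) ?_
        simp only [htv, if_pos]
        exact vol_Jset _ _ hm hmb hδ0
      have h2 : ∀ j ∈ S', volume (tv u j ∩ Set.Icc (-(1:ℝ)/2) (1/2)) = ENNReal.ofReal (1/M) := by
        intro j hj
        have hjj : j ≠ j0 := Finset.ne_of_mem_erase hj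
        have htvj : tv u j = cellSet M (u ⟨j, hj⟩) := by
          simp only [htv]; rw [if_neg hjj, dif_pos hj]
        rw [htvj]
        exact cell_vol hM (u ⟨j, hj⟩).2
      rw [Finset.prod_congr rfl h2, Finset.prod_const]
      exact mul_le_mul_left h1 _
    have hsum : μ Bad ≤ (M ^ S'.card : ℕ) •
        (ENNReal.ofReal (2 * δ / m) * ENNReal.ofReal (1/M) ^ S'.card) := by
      calc μ Bad ≤ μ (⋃ u : {j // j ∈ S'} → Fin M, {a | ∀ j ∈ S, a j ∈ tv u j}) :=
            measure_mono cover
        _ ≤ ∑' u : {j // j ∈ S'} → Fin M, μ {a | ∀ j ∈ S, a j ∈ tv u j} :=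
            measure_iUnion_le _
        _ = ∑ u : {j // j ∈ S'} → Fin M, μ {a | ∀ j ∈ S, a j ∈ tv u j} := tsum_fintype _
        _ ≤ ∑ _u : {j // j ∈ S'} → Fin M,
            (ENNReal.ofReal (2 * δ / m) * ENNReal.ofReal (1/M) ^ S'.card) :=
            Finset.sum_le_sum fun u _ => hbound u
        _ = (Fintype.card ({j // j ∈ S'} → Fin M)) •
            (ENNReal.ofReal (2 * δ / m) * ENNReal.ofReal (1/M) ^ S'.card) := by
            rw [Finset.sum_const, Finset.card_univ]
        _ = (M ^ S'.card : ℕ) • _ := by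
            rw [Fintype.card_fun, Fintype.card_fin, Fintype.card_coe]
    refine le_trans hsum ?_
    have hMinv : (M : ℝ≥0∞) * ENNReal.ofReal (1/M) = 1 := by
      rw [one_div, ENNReal.ofReal_inv_of_pos hM0, ENNReal.ofReal_natCast]
      exact ENNReal.mul_inv_cancel (by exact_mod_cast Nat.one_le_iff_ne_zero.mp hM)
        (ENNReal.natCast_ne_top M)
    rw [nsmul_eq_mul]
    push_cast
    rw [show ((M:ℝ≥0∞) ^ S'.card) *
        (ENNReal.ofReal (2 * δ / m) * ENNReal.ofReal (1/M) ^ S'.card)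
        = ENNReal.ofReal (2 * δ / m) * ((M:ℝ≥0∞) * ENNReal.ofReal (1/M)) ^ S'.card by
      rw [mul_pow]; ring]
    rw [hMinv, one_pow, mul_one]
  have htend : Filter.Tendsto (fun M : ℕ => ENNReal.ofReal (2 * (ε + R / M) / m))
      Filter.atTop (nhds (ENNReal.ofReal (2 * ε / m))) := by
    refine ENNReal.tendsto_ofReal ?_
    have h1 : Filter.Tendsto (fun M : ℕ => R / (M:ℝ)) Filter.atTop (nhds 0) :=
      tendsto_const_div_atTop_nhds_zero_nat R
    have h2 : Filter.Tendsto (fun M : ℕ => 2 * (ε + R / (M:ℝ)) / m) Filter.atTop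
        (nhds (2 * (ε + 0) / m)) := ((h1.const_add ε).const_mul 2).div_const m
    simpa using h2
  exact ge_of_tendsto htend (Filter.eventually_atTop.mpr ⟨1, fun M hM => key M hM⟩)


/-- exponent used throughout -/
def tauN (d n r : ℕ) : ℕ := n + d*r + r + 2

/-- the bad set attached to one encoded vector `t` at scale `N` -/
noncomputable def Bad2 {d : ℕ} (n r : ℕ) (g : Fin d → Fin d → ℝ) (N : ℕ) (γ : ℝ)
    (t : Fin r → Option (Zd d × Bool)) : Set (Zd d → ℝ) :=
  {a | (∀ j, a j ∈ Set.Icc (-(1:ℝ)/2) (1/2)) ∧ (∀ i p, t i = some p → enorm p.1 ≤ N) ∧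
       (∃ j, kOf t j ≠ 0) ∧
       |∑ᶠ j, (kOf t j : ℝ) * nlsFreq d n g a j| < γ / (N:ℝ) ^ (tauN d n r)}

lemma bad2_bound {d : ℕ} (n r : ℕ) (g : Fin d → Fin d → ℝ)
    (μ : Measure (Zd d → ℝ)) (hμ : IsCylinderUniform d μ) {γ : ℝ} (hγ : 0 ≤ γ)
    (N : ℕ) (t : Fin r → Option (Zd d × Bool)) :
    μ (Bad2 n r g N γ t) ≤
      if (∀ i p, t i = some p → enorm p.1 ≤ N) then
        ENNReal.ofReal (2 * (γ / (N:ℝ) ^ (tauN d n r)) * (1 + (N:ℝ)) ^ n)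
      else 0 := by
  classical
  split_ifs with hloc
  · by_cases hne : ∃ j, kOf t j ≠ 0
    · obtain ⟨j0, hj0⟩ := hne
      set S : Finset (Zd d) :=
        (Finset.univ.biUnion fun i => (t i).toFinset).image Prod.fst with hSdef
      have hmemS : ∀ j, kOf t j ≠ 0 → j ∈ S := by
        intro j hj
        obtain ⟨i, p, hip, hpj⟩ := kOf_support t j hj
        refine Finset.mem_image.mpr ⟨p, Finset.mem_biUnion.mpr ⟨i, Finset.mem_univ i, ?_⟩, hpj⟩
        rw [Option.mem_toFinset, hip]
        rfl
      have hj0S : j0 ∈ S := hmemS j0 hj0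
      have hloc' : ∀ j, kOf t j ≠ 0 → enorm j ≤ N := by
        intro j hj
        obtain ⟨i, p, hip, hpj⟩ := kOf_support t j hj
        exact hpj ▸ hloc i p hip
      set b : Zd d → ℝ := fun j => (kOf t j : ℝ) * wt d n j with hb
      set c : ℝ := ∑ j ∈ S, (kOf t j : ℝ) * qform d g j with hc
      set m : ℝ := ((1 + (N:ℝ)) ^ n)⁻¹ with hmdef
      set ε : ℝ := γ / (N:ℝ) ^ (tauN d n r) with hε
      have hN0 : (0:ℝ) ≤ N := Nat.cast_nonneg N
      have hm : 0 < m := by rw [hmdef]; positivity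
      have hε0 : 0 ≤ ε := by
        rw [hε]
        rcases Nat.eq_zero_or_pos N with h | h
        · simp [h, pow_eq_zero_iff]
          positivity
        · have : (0:ℝ) < N := by exact_mod_cast h
          positivity
      have hmb : m ≤ |b j0| := by
        have h1 : (1:ℝ) ≤ |(kOf t j0 : ℝ)| := by
          rw [← Int.cast_abs]
          exact_mod_cast Int.one_le_abs hj0
        have h2 : m ≤ wt d n j0 := by
          rw [hmdef, wt]
          have he : enorm j0 ≤ N := hloc' j0 hj0
          have hpow : (1 + enorm j0) ^ n ≤ (1 + (N:ℝ)) ^ n :=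
            pow_le_pow_left₀ (by have := enorm_nonneg j0; linarith) (by linarith) n
          exact inv_anti₀ (by have := enorm_nonneg j0; positivity) hpow
        calc m ≤ wt d n j0 := h2
          _ = 1 * wt d n j0 := (one_mul _).symm
          _ ≤ |(kOf t j0 : ℝ)| * wt d n j0 :=
            mul_le_mul_of_nonneg_right h1 (wt_pos j0).le
          _ = |(kOf t j0 : ℝ)| * |wt d n j0| := by
            rw [abs_of_pos (wt_pos (n := n) j0)]
          _ = |b j0| := by rw [hb, abs_mul]
      have hR : ∑ j ∈ S.erase j0, |b j| ≤ (r : ℝ) := by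
        have hstep : ∀ j ∈ S.erase j0, |b j| ≤ |(kOf t j : ℝ)| := by
          intro j _
          rw [hb, abs_mul, abs_of_pos (wt_pos (n := n) j)]
          calc |(kOf t j : ℝ)| * wt d n j ≤ |(kOf t j : ℝ)| * 1 :=
            mul_le_mul_of_nonneg_left (wt_le_one j) (abs_nonneg _)
          _ = |(kOf t j : ℝ)| := mul_one _
        calc ∑ j ∈ S.erase j0, |b j| ≤ ∑ j ∈ S.erase j0, |(kOf t j : ℝ)| :=
              Finset.sum_le_sum hstep
          _ ≤ ∑ j ∈ S, |(kOf t j : ℝ)| := by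
              refine Finset.sum_le_sum_of_subset_of_nonneg (Finset.erase_subset _ _)
                fun j _ _ => abs_nonneg _
          _ = ((∑ j ∈ S, |kOf t j| : ℤ) : ℝ) := by push_cast; rfl
          _ ≤ (r : ℝ) := by exact_mod_cast kOf_abs_sum_le t S
      have hsub : Bad2 n r g N γ t ⊆
          {a | (∀ j, a j ∈ Set.Icc (-(1:ℝ)/2) (1/2)) ∧ |c + ∑ j ∈ S, b j * a j| < ε} := by
        rintro a ⟨hcube, _, _, hval⟩
        refine ⟨hcube, ?_⟩
        have hfs : ∑ᶠ j, (kOf t j : ℝ) * nlsFreq d n g a j =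
            ∑ j ∈ S, (kOf t j : ℝ) * nlsFreq d n g a j := by
          refine finsum_eq_finset_sum_of_support_subset _ ?_
          intro j hj
          simp only [Function.mem_support] at hj
          have : kOf t j ≠ 0 := by
            intro h0
            apply hj
            rw [h0]
            simp
          exact hmemS j this
        have hexp : ∑ j ∈ S, (kOf t j : ℝ) * nlsFreq d n g a j =
            c + ∑ j ∈ S, b j * a j := by
          rw [hc, hb, ← Finset.sum_add_distrib]
          refine Finset.sum_congr rfl fun j _ => ?_
          rw [nlsFreq_eq]
          ring
        rw [← hexp, ← hfs]
        exact hval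
      refine le_trans (measure_mono hsub) ?_
      refine le_trans (slab μ hμ S j0 hj0S b c m (r:ℝ) ε hm hmb hR hε0) ?_
      refine ENNReal.ofReal_le_ofReal ?_
      rw [hmdef, hε, div_inv_eq_mul]
    · have : Bad2 n r g N γ t = ∅ := by
        ext a
        simp only [Bad2, Set.mem_setOf_eq, Set.mem_empty_iff_false, iff_false]
        rintro ⟨_, _, hx, _⟩
        exact hne hx
      rw [this, measure_empty]
      positivity
  · have : Bad2 n r g N γ t = ∅ := by
      ext a
      simp only [Bad2, Set.mem_setOf_eq, Set.mem_empty_iff_false, iff_false]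
      rintro ⟨_, hx, _, _⟩
      exact hloc hx
    rw [this, measure_empty]


/-- the finite set of encodings located in the ball of radius `N` -/
lemma located_finset (d r N : ℕ) :
    ∃ F : Finset (Fin r → Option (Zd d × Bool)),
      (∀ t, (∀ i p, t i = some p → enorm p.1 ≤ N) → t ∈ F) ∧
      F.card ≤ (2 * (2*N+1)^d + 1) ^ r := by
  classical
  set box : Finset (Zd d) := Finset.Icc (fun _ => -(N:ℤ)) (fun _ => (N:ℤ)) with hbox
  set opts : Finset (Option (Zd d × Bool)) :=
    insert none ((box ×ˢ (Finset.univ : Finset Bool)).image some) with hopts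
  refine ⟨Fintype.piFinset fun _ => opts, ?_, ?_⟩
  · intro t ht
    refine Fintype.mem_piFinset.mpr fun i => ?_
    match hti : t i with
    | none => exact Finset.mem_insert_self _ _
    | some p =>
      refine Finset.mem_insert_of_mem ?_
      refine Finset.mem_image.mpr ⟨p, ?_, rfl⟩
      refine Finset.mem_product.mpr ⟨?_, Finset.mem_univ _⟩
      rw [hbox, Finset.mem_Icc]
      have hpN : enorm p.1 ≤ N := ht i p hti
      constructor <;> intro ii <;>
      · have h1 : |(p.1 ii : ℝ)| ≤ (N : ℝ) := le_trans (abs_coord_le_enorm p.1 ii) hpN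
        have h2 : |p.1 ii| ≤ (N : ℤ) := by exact_mod_cast (by rwa [← Int.cast_abs] at h1 :
          ((|p.1 ii| : ℤ) : ℝ) ≤ (N:ℝ))
        rw [abs_le] at h2
        first
        | exact h2.1
        | exact h2.2
  · rw [Fintype.card_piFinset]
    have hboxcard : box.card = (2*N+1)^d := by
      rw [hbox, Pi.card_Icc]
      have : ∀ i : Fin d, (Finset.Icc (-(N:ℤ)) (N:ℤ)).card = 2*N+1 := by
        intro i
        rw [Int.card_Icc]
        omega
      rw [Finset.prod_congr rfl (fun i _ => this i), Finset.prod_const, Finset.card_univ,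
        Fintype.card_fin]
    have hoptscard : opts.card ≤ 2 * (2*N+1)^d + 1 := by
      refine le_trans (Finset.card_insert_le _ _) ?_
      have := Finset.card_image_le (s := box ×ˢ (Finset.univ : Finset Bool)) (f := some)
      rw [Finset.card_product, Finset.card_univ, Fintype.card_bool, hboxcard] at this
      omega
    calc ∏ _i : Fin r, opts.card ≤ ∏ _i : Fin r, (2 * (2*N+1)^d + 1) :=
          Finset.prod_le_prod' fun _ _ => hoptscard
      _ = (2 * (2*N+1)^d + 1) ^ r := by
          rw [Finset.prod_const, Finset.card_univ, Fintype.card_fin]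

/-- per-scale real estimate -/
lemma perN_real (d n r : ℕ) {γ x : ℝ} (hγ : 0 ≤ γ) (hx : 1 ≤ x) (card : ℕ)
    (hcard : (card : ℝ) ≤ 3^((d+1)*r) * x^(d*r)) :
    (card : ℝ) * (2 * (γ / x ^ (tauN d n r)) * (1 + x) ^ n) ≤
      γ * (2^(n+1) * 3^((d+1)*r)) * (1 / x^2) := by
  have hx0 : (0:ℝ) < x := lt_of_lt_of_le one_pos hx
  have h2 : (1 + x)^n ≤ 2^n * x^n := by
    rw [← mul_pow]
    exact pow_le_pow_left₀ (by linarith) (by linarith) n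
  have htau : x ^ (tauN d n r) = x^n * x^(d*r) * x^r * x^2 := by
    rw [tauN, pow_add, pow_add, pow_add]
  have hεpos : 0 ≤ γ / x ^ (tauN d n r) := by positivity
  calc (card : ℝ) * (2 * (γ / x ^ (tauN d n r)) * (1 + x) ^ n)
      ≤ (3^((d+1)*r) * x^(d*r)) * (2 * (γ / x ^ (tauN d n r)) * (2^n * x^n)) := by
        refine mul_le_mul hcard ?_ (by positivity) (by positivity)
        refine mul_le_mul_of_nonneg_left h2 (by positivity)
    _ = γ * (2^(n+1) * 3^((d+1)*r)) * ((x^(d*r) * x^n) / x ^ (tauN d n r)) := by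
        rw [pow_succ]
        field_simp
    _ ≤ γ * (2^(n+1) * 3^((d+1)*r)) * (1 / x^2) := by
        refine mul_le_mul_of_nonneg_left ?_ (by positivity)
        rw [htau]
        rw [div_le_div_iff₀ (by positivity) (by positivity)]
        have h1r : (1:ℝ) ≤ x^r := one_le_pow₀ hx
        have h1n : (0:ℝ) < x^n := by positivity
        have h1dr : (0:ℝ) < x^(d*r) := by positivity
        have h1two : (0:ℝ) < x^2 := by positivity
        nlinarith [mul_pos (mul_pos h1n h1dr) h1two]

/-- the global bad set at level `γ` -/
noncomputable def BigBad {d : ℕ} (n r : ℕ) (g : Fin d → Fin d → ℝ) (γ : ℝ) :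
    Set (Zd d → ℝ) :=
  {a | (∀ j, a j ∈ Set.Icc (-(1:ℝ)/2) (1/2)) ∧ ∃ N : ℕ, 1 ≤ N ∧ ∃ k : Zd d → ℤ,
    (∀ j, k j ≠ 0 → enorm j ≤ N) ∧ (Function.support k).Finite ∧
    0 < ∑ᶠ j, (k j).natAbs ∧ ∑ᶠ j, (k j).natAbs ≤ r ∧
    |∑ᶠ j, (k j : ℝ) * nlsFreq d n g a j| < γ / (N:ℝ) ^ ((tauN d n r : ℕ) : ℝ)}

lemma bigBad_subset {d : ℕ} (n r : ℕ) (g : Fin d → Fin d → ℝ) (γ : ℝ) :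
    BigBad n r g γ ⊆ ⋃ (M : ℕ), ⋃ (t : Fin r → Option (Zd d × Bool)),
      Bad2 n r g (M+1) γ t := by
  rintro a ⟨hcube, N, hN, k, hsupp, hfin, hpos, hler, hval⟩
  set S := hfin.toFinset with hSdef
  have hmemS : ∀ j, k j ≠ 0 → j ∈ S := fun j hj => hfin.mem_toFinset.mpr hj
  have hsum_eq : ∑ᶠ j, (k j).natAbs = ∑ j ∈ S, (k j).natAbs := by
    refine finsum_eq_finset_sum_of_support_subset _ ?_
    intro j hj
    simp only [Function.mem_support] at hj
    exact hmemS j (fun h0 => hj (by rw [h0]; rfl))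
  obtain ⟨t, ht1, ht2⟩ := encode r k S hmemS (by rw [← hsum_eq]; exact hler)
  refine Set.mem_iUnion.mpr ⟨N - 1, Set.mem_iUnion.mpr ⟨t, ?_⟩⟩
  have hN1 : N - 1 + 1 = N := by omega
  rw [hN1]
  have hkj : ∃ j, k j ≠ 0 := by
    by_contra hc
    push_neg at hc
    rw [hsum_eq] at hpos
    have : ∑ j ∈ S, (k j).natAbs = 0 :=
      Finset.sum_eq_zero fun j _ => by rw [hc j]; rfl
    omega
  obtain ⟨j1, hj1⟩ := hkj
  refine ⟨hcube, ?_, ⟨j1, by rw [ht2 j1]; exact hj1⟩, ?_⟩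
  · intro i p hp
    exact hsupp p.1 (ht1 i p hp)
  · have hre : ∑ᶠ j, (kOf t j : ℝ) * nlsFreq d n g a j =
        ∑ᶠ j, (k j : ℝ) * nlsFreq d n g a j := by
      congr 1
      funext j
      rw [ht2 j]
    rw [hre]
    have hrw : (N:ℝ) ^ ((tauN d n r : ℕ) : ℝ) = (N:ℝ) ^ (tauN d n r) :=
      Real.rpow_natCast _ _
    rw [← hrw]
    exact hval

/-- the global estimate -/
lemma bigBad_bound {d : ℕ} (n r : ℕ) (g : Fin d → Fin d → ℝ)
    (μ : Measure (Zd d → ℝ)) (hμ : IsCylinderUniform d μ) {γ : ℝ} (hγ : 0 ≤ γ) :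
    μ (BigBad n r g γ) ≤ ENNReal.ofReal
      (γ * (2^(n+1) * 3^((d+1)*r)) * ∑' M : ℕ, 1 / ((M:ℝ)+1)^2) := by
  classical
  have hsummable : Summable (fun M : ℕ => 1 / ((M:ℝ)+1)^2) := by
    have h0 : Summable (fun M : ℕ => 1 / (M:ℝ)^2) :=
      Real.summable_one_div_nat_pow.mpr one_lt_two
    have := (summable_nat_add_iff 1).mpr h0
    refine this.congr fun M => ?_
    push_cast
    ring_nf
  set C : ℝ := 2^(n+1) * 3^((d+1)*r) with hC
  have hC0 : 0 ≤ C := by rw [hC]; positivity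
  calc μ (BigBad n r g γ)
      ≤ μ (⋃ (M : ℕ), ⋃ (t : Fin r → Option (Zd d × Bool)), Bad2 n r g (M+1) γ t) :=
        measure_mono (bigBad_subset n r g γ)
    _ ≤ ∑' M : ℕ, μ (⋃ (t : Fin r → Option (Zd d × Bool)), Bad2 n r g (M+1) γ t) :=
        measure_iUnion_le _
    _ ≤ ∑' M : ℕ, ENNReal.ofReal (γ * C * (1 / ((M:ℝ)+1)^2)) := by
        refine ENNReal.tsum_le_tsum fun M => ?_
        set N := M + 1 with hNdef
        have hN1 : 1 ≤ N := Nat.le_add_left 1 M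
        have hx : (1:ℝ) ≤ (N:ℝ) := by exact_mod_cast hN1
        obtain ⟨F, hFmem, hFcard⟩ := located_finset d r N
        have hcards : ((2 * (2*N+1)^d + 1) ^ r : ℕ) ≤ 3^((d+1)*r) * N^(d*r) := by
          have hs1 : 2*N+1 ≤ 3*N := by omega
          have hs2 : (2*N+1)^d ≤ 3^d * N^d := by
            calc (2*N+1)^d ≤ (3*N)^d := Nat.pow_le_pow_left hs1 d
              _ = 3^d * N^d := Nat.mul_pow 3 N d
          have hs3 : 1 ≤ 3^d * N^d :=
            Nat.one_le_iff_ne_zero.mpr (by positivity)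
          calc (2 * (2*N+1)^d + 1) ^ r ≤ (2 * (3^d * N^d) + (3^d * N^d)) ^ r := by
                refine Nat.pow_le_pow_left (by omega) r
            _ = (3^(d+1) * N^d) ^ r := by ring_nf
            _ = 3^((d+1)*r) * N^(d*r) := by
                rw [Nat.mul_pow, ← Nat.pow_mul, ← Nat.pow_mul]
        have hstep : ∀ t, μ (Bad2 n r g N γ t) ≤
            if (∀ i p, t i = some p → enorm p.1 ≤ N) then
              ENNReal.ofReal (2 * (γ / (N:ℝ) ^ (tauN d n r)) * (1 + (N:ℝ)) ^ n)
            else 0 := fun t => bad2_bound n r g μ hμ hγ N t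
        calc μ (⋃ t, Bad2 n r g N γ t)
            ≤ ∑' t : Fin r → Option (Zd d × Bool), μ (Bad2 n r g N γ t) :=
              measure_iUnion_le _
          _ ≤ ∑' t : Fin r → Option (Zd d × Bool),
              (if t ∈ F then
                ENNReal.ofReal (2 * (γ / (N:ℝ) ^ (tauN d n r)) * (1 + (N:ℝ)) ^ n)
              else 0) := by
              refine ENNReal.tsum_le_tsum fun t => le_trans (hstep t) ?_
              split_ifs with h1 h2
              · exact le_rfl
              · exact absurd (hFmem t h1) h2
              · exact zero_le
              · exact le_rfl
          _ = ∑ t ∈ F, ENNReal.ofReal (2 * (γ / (N:ℝ) ^ (tauN d n r)) * (1 + (N:ℝ)) ^ n) := by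
              rw [tsum_eq_sum (s := F) (fun t ht => if_neg ht)]
              exact Finset.sum_congr rfl fun t ht => if_pos ht
          _ = (F.card : ℝ≥0∞) *
              ENNReal.ofReal (2 * (γ / (N:ℝ) ^ (tauN d n r)) * (1 + (N:ℝ)) ^ n) := by
              rw [Finset.sum_const, nsmul_eq_mul]
          _ ≤ ENNReal.ofReal (γ * C * (1 / ((M:ℝ)+1)^2)) := by
              rw [← ENNReal.ofReal_natCast F.card, ← ENNReal.ofReal_mul (Nat.cast_nonneg _)]
              refine ENNReal.ofReal_le_ofReal ?_
              have hcard : (F.card : ℝ) ≤ 3^((d+1)*r) * (N:ℝ)^(d*r) := by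
                calc (F.card : ℝ) ≤ (((2 * (2*N+1)^d + 1) ^ r : ℕ) : ℝ) := by
                      exact_mod_cast hFcard
                  _ ≤ ((3^((d+1)*r) * N^(d*r) : ℕ) : ℝ) := by exact_mod_cast hcards
                  _ = 3^((d+1)*r) * (N:ℝ)^(d*r) := by push_cast; ring
              have := perN_real d n r hγ hx F.card hcard
              have hMN : ((M:ℝ)+1) = (N:ℝ) := by rw [hNdef]; push_cast; ring
              rw [hMN]
              exact this
    _ = ENNReal.ofReal (γ * C * ∑' M : ℕ, 1 / ((M:ℝ)+1)^2) := by
        rw [← ENNReal.ofReal_tsum_of_nonneg (fun M => by positivity)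
          (hsummable.mul_left (γ * C))]
        rw [tsum_mul_left]

/-- Lemma `tutto.res`: full measure non-resonance for NLS.
There are `τ > 0` and a set `𝒱^{res}` of zero product-uniform measure such that for
every `a ∈ [−1/2,1/2]^{ℤ^d} ∖ 𝒱^{res}` there is `γ > 0` with
`|Σ k_j ω_j(a)| ≥ γ/N^τ` for every `N ≥ 1` and every `k : ℤ^d_N → ℤ` with
`0 < Σ|k_j| ≤ r`. -/
theorem stmt_12 (d : ℕ) (hd : 1 ≤ d) (n r : ℕ)
    (g : Fin d → Fin d → ℝ) (hsym : ∀ i k, g i k = g k i)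
    (hpos : ∀ x : Fin d → ℝ, x ≠ 0 → 0 < ∑ i, ∑ k, g i k * x i * x k)
    (μ : Measure (Zd d → ℝ)) (hμ : IsCylinderUniform d μ) :
    ∃ τ : ℝ, 0 < τ ∧ ∃ Vres : Set (Zd d → ℝ), μ Vres = 0 ∧
      ∀ a : Zd d → ℝ, (∀ j, a j ∈ Set.Icc (-(1 : ℝ) / 2) (1 / 2)) → a ∉ Vres →
        ∃ γ : ℝ, 0 < γ ∧ ∀ N : ℕ, 1 ≤ N → ∀ k : Zd d → ℤ,
          (∀ j, k j ≠ 0 → enorm j ≤ N) → (Function.support k).Finite →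
          0 < ∑ᶠ j, (k j).natAbs → ∑ᶠ j, (k j).natAbs ≤ r →
          γ / (N : ℝ) ^ τ ≤ |∑ᶠ j : Zd d, (k j : ℝ) * nlsFreq d n g a j| := by
  classical
  have htau0 : 0 < ((tauN d n r : ℕ) : ℝ) := by
    have : 0 < tauN d n r := by rw [tauN]; omega
    exact_mod_cast this
  refine ⟨((tauN d n r : ℕ) : ℝ), htau0, ⋂ m : ℕ, BigBad n r g (1/((m:ℝ)+1)), ?_, ?_⟩
  · -- zero measure
    set D : ℝ := (2^(n+1) * 3^((d+1)*r)) * ∑' M : ℕ, 1 / ((M:ℝ)+1)^2 with hD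
    have hb : ∀ m : ℕ, μ (⋂ m : ℕ, BigBad n r g (1/((m:ℝ)+1))) ≤
        ENNReal.ofReal ((1/((m:ℝ)+1)) * D) := by
      intro m
      have hγ0 : (0:ℝ) ≤ 1/((m:ℝ)+1) := by positivity
      refine le_trans (measure_mono (Set.iInter_subset _ m)) ?_
      refine le_trans (bigBad_bound n r g μ hμ hγ0) ?_
      refine ENNReal.ofReal_le_ofReal (le_of_eq ?_)
      rw [hD]
      ring
    have htend : Filter.Tendsto (fun m : ℕ => ENNReal.ofReal ((1/((m:ℝ)+1)) * D))
        Filter.atTop (nhds 0) := by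
      have h1 : Filter.Tendsto (fun m : ℕ => (1/((m:ℝ)+1)) * D) Filter.atTop (nhds 0) := by
        have h2 := tendsto_one_div_add_atTop_nhds_zero_nat.mul_const D
        simpa using h2
      have := ENNReal.tendsto_ofReal h1
      simpa using this
    have hle : μ (⋂ m : ℕ, BigBad n r g (1/((m:ℝ)+1))) ≤ 0 := ge_of_tendsto' htend hb
    exact le_antisymm hle zero_le
  · intro a hcube hnot
    have hm : ∃ m : ℕ, a ∉ BigBad n r g (1/((m:ℝ)+1)) := by
      by_contra hc
      push_neg at hc
      exact hnot (Set.mem_iInter.mpr hc)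
    obtain ⟨m, hm⟩ := hm
    refine ⟨1/((m:ℝ)+1), by positivity, ?_⟩
    intro N hN k h1 h2 h3 h4
    by_contra hlt
    push_neg at hlt
    exact hm ⟨hcube, N, hN, k, h1, h2, h3, h4, hlt⟩


end AG
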